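/- For A symmetric positive definite, the function d ↦ trace(A Diag(d)) / (∏ᵢ dᵢ)^{1/n} on ℝ^n_{++} is stationary at d* with d*ᵢ = 1/Aᵢᵢ (the Jacobi scaling), and any positive multiple of d* is also stationary; equivalently ω(Diag(d)^{1/2} A Diag(d)^{1/2}) is minimized over d > 0 at d* = 1./diag(A). -/

import Mathlib

open Matrix

open Finset in
lemma jacobi_aux (n : ℕ) (hn : 0 < n) (c : ℝ) (hc : 0 < c) (w x h : Fin n → ℝ)
    (hw : ∀ i, 0 < w i) (hx : ∀ i, w i * x i = c) :
    HasDerivAt (fun t : ℝ =>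
      (∑ i, w i * (x i + t * h i)) / (∏ i, (x i + t * h i)) ^ ((1 : ℝ) / n)) 0 0 := by
  have hn' : (0:ℝ) < n := Nat.cast_pos.mpr hn
  have hxpos : ∀ i, 0 < x i := fun i => by nlinarith [hw i, hx i, hc]
  have hp0 : 0 < ∏ i, x i := Finset.prod_pos fun i _ => hxpos i
  set S := ∑ i, w i * h i with hS
  set D := ∑ i, (∏ j ∈ Finset.univ.erase i, x j) * h i with hD
  have hDc : D * c = (∏ i, x i) * S := by
    rw [hD, hS, Finset.sum_mul, Finset.mul_sum]
    refine Finset.sum_congr rfl fun i _ => ?_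
    rw [← hx i, ← Finset.prod_erase_mul Finset.univ x (Finset.mem_univ i)]
    ring
  have hnum : HasDerivAt (fun t : ℝ => ∑ i, w i * (x i + t * h i)) S 0 := by
    have h1 : ∀ i ∈ Finset.univ, HasDerivAt (fun t : ℝ => w i * (x i + t * h i)) (w i * h i) (0:ℝ) :=
      fun i _ => by simpa using (((hasDerivAt_id (0:ℝ)).mul_const (h i)).const_add (x i)).const_mul (w i)
    simpa [hS] using HasDerivAt.fun_sum h1
  have hprod : HasDerivAt (fun t : ℝ => ∏ i, (x i + t * h i)) D 0 := by
    have h1 : ∀ i ∈ Finset.univ, HasDerivAt (fun t : ℝ => x i + t * h i) (h i) (0:ℝ) :=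
      fun i _ => by simpa using ((hasDerivAt_id (0:ℝ)).mul_const (h i)).const_add (x i)
    simpa [hD, smul_eq_mul] using HasDerivAt.fun_finsetProd h1
  have hval : ∀ i, x i + (0:ℝ) * h i = x i := fun i => by ring
  have hpne : (∏ i, (x i + (0:ℝ) * h i)) ≠ 0 := by simpa [hval] using hp0.ne'
  have hden := hprod.rpow_const (p := (1:ℝ)/n) (Or.inl hpne)
  have hdne : (∏ i, (x i + (0:ℝ) * h i)) ^ ((1:ℝ)/n) ≠ 0 := by
    simp only [hval]; exact (Real.rpow_pos_of_pos hp0 _).ne'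
  have H := hnum.div hden hdne
  simp only [hval, zero_mul, add_zero] at H ⊢
  convert H using 1
  · rfl
  · rfl
  · rfl
  have hsum : ∑ i, w i * x i = n * c := by
    rw [Finset.sum_congr rfl fun i _ => hx i]; simp [mul_comm]
  have hpow : (∏ i, x i) * (∏ i, x i) ^ ((1:ℝ)/n - 1) = (∏ i, x i) ^ ((1:ℝ)/n) := by
    conv_rhs => rw [show ((1:ℝ)/n) = 1 + ((1:ℝ)/n - 1) by ring, Real.rpow_add hp0, Real.rpow_one]
  rw [hsum]
  have : S * (∏ i, x i) ^ ((1:ℝ)/n) - (n:ℝ) * c * (D * ((1:ℝ)/n) * (∏ i, x i) ^ ((1:ℝ)/n - 1)) = 0 := by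
    have : (n:ℝ) * c * (D * ((1:ℝ)/n) * (∏ i, x i) ^ ((1:ℝ)/n - 1))
        = (D * c) * (∏ i, x i) ^ ((1:ℝ)/n - 1) := by
      field_simp
    rw [this, hDc]
    rw [show (∏ i, x i) * S * (∏ i, x i) ^ ((1:ℝ)/n - 1)
        = S * ((∏ i, x i) * (∏ i, x i) ^ ((1:ℝ)/n - 1)) by ring, hpow]
    ring
  rw [this, zero_div]

/-- Jacobi scaling is `ω`-optimal: for `A ≻ 0`, the function
`d ↦ trace(A Diag d)/(∏ᵢ dᵢ)^{1/n}` on `ℝ^n_{++}` is stationary at `d* = 1./diag(A)`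
(i.e. `d*ᵢ = 1/Aᵢᵢ`) and at every positive multiple `c·d*` (stated via directional
derivatives), and `d*` minimizes `ω(A Diag d) = (trace(A Diag d)/n)/det(A Diag d)^{1/n}`
over all `d > 0`. -/
theorem jacobi_scaling_omega_optimal (n : ℕ) (hn : 0 < n)
    (A : Matrix (Fin n) (Fin n) ℝ) (hA : A.PosDef) :
    let dstar : Fin n → ℝ := fun i => 1 / A i i
    let f : (Fin n → ℝ) → ℝ :=
      fun d => (A * Matrix.diagonal d).trace / (∏ i, d i) ^ ((1 : ℝ) / n)
    let omega : Matrix (Fin n) (Fin n) ℝ → ℝ :=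
      fun B => (B.trace / n) / B.det ^ ((1 : ℝ) / n)
    (∀ c : ℝ, 0 < c → ∀ h : Fin n → ℝ,
        HasDerivAt (fun t : ℝ => f (c • dstar + t • h)) 0 0) ∧
      ∀ d : Fin n → ℝ, (∀ i, 0 < d i) →
        omega (A * Matrix.diagonal dstar) ≤ omega (A * Matrix.diagonal d) := by
  intro dstar f omega
  have hn' : (0:ℝ) < n := Nat.cast_pos.mpr hn
  have hdiag : ∀ i, 0 < A i i := fun i => by
    exact hA.diag_pos
  have hdet : 0 < A.det := hA.det_pos
  have htrace : ∀ d : Fin n → ℝ, (A * Matrix.diagonal d).trace = ∑ i, A i i * d i := by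
    intro d
    simp [Matrix.trace, Matrix.diag, Matrix.mul_diagonal]
  constructor
  · intro c hc h
    have key : (fun t : ℝ => f (c • dstar + t • h))
        = fun t : ℝ => (∑ i, A i i * (c * dstar i + t * h i)) /
            (∏ i, (c * dstar i + t * h i)) ^ ((1 : ℝ) / n) := by
      funext t
      simp [f, htrace, Pi.add_apply, Pi.smul_apply, smul_eq_mul]
    rw [key]
    exact jacobi_aux n hn c hc (fun i => A i i) (fun i => c * dstar i) h hdiag
      (fun i => by
        simp only [dstar]
        rw [mul_comm (A i i), mul_assoc, one_div, inv_mul_cancel₀ (hdiag i).ne', mul_one])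
  · intro d hd
    have hpd : 0 < ∏ i, d i := Finset.prod_pos fun i _ => hd i
    have hpA : 0 < ∏ i, A i i := Finset.prod_pos fun i _ => hdiag i
    have hds : ∀ i, 0 < dstar i := fun i => one_div_pos.mpr (hdiag i)
    -- values of omega
    have homega : ∀ e : Fin n → ℝ, (∀ i, 0 < e i) → omega (A * Matrix.diagonal e)
        = ((∑ i, A i i * e i) / n) / (A.det ^ ((1:ℝ)/n) * (∏ i, e i) ^ ((1:ℝ)/n)) := by
      intro e he
      simp only [omega, htrace, Matrix.det_mul, Matrix.det_diagonal]
      rw [Real.mul_rpow hdet.le (Finset.prod_pos fun i _ => he i).le]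
    have hsumstar : ∑ i, A i i * dstar i = (n:ℝ) := by
      simp only [dstar]
      rw [Finset.sum_congr rfl fun i _ => by
        rw [mul_one_div, div_self (hdiag i).ne']]
      simp
    have hprodstar : ∏ i, dstar i = (∏ i, A i i)⁻¹ := by
      simp only [dstar, one_div]
      rw [← Finset.prod_inv_distrib]
    have hdetr : (0:ℝ) < A.det ^ ((1:ℝ)/n) := Real.rpow_pos_of_pos hdet _
    have hpAr : (0:ℝ) < (∏ i, A i i) ^ ((1:ℝ)/n) := Real.rpow_pos_of_pos hpA _
    have hpdr : (0:ℝ) < (∏ i, d i) ^ ((1:ℝ)/n) := Real.rpow_pos_of_pos hpd _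
    have hL : omega (A * Matrix.diagonal dstar)
        = (∏ i, A i i) ^ ((1:ℝ)/n) / A.det ^ ((1:ℝ)/n) := by
      rw [homega dstar hds, hsumstar, hprodstar, Real.inv_rpow hpA.le, div_self hn'.ne']
      field_simp
    rw [hL, homega d hd]
    -- AM-GM
    have key : (∏ i, A i i) ^ ((1:ℝ)/n) * (∏ i, d i) ^ ((1:ℝ)/n)
        ≤ (∑ i, A i i * d i) / n := by
      have amgm := Real.geom_mean_le_arith_mean_weighted Finset.univ
        (fun _ => 1/(n:ℝ)) (fun i => A i i * d i)
        (fun i _ => by positivity)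
        (by simp [Finset.card_univ]; field_simp)
        (fun i _ => (mul_pos (hdiag i) (hd i)).le)
      rw [Real.finset_prod_rpow _ _ (fun i _ => (mul_pos (hdiag i) (hd i)).le),
        Finset.prod_mul_distrib, Real.mul_rpow hpA.le hpd.le, ← Finset.mul_sum] at amgm
      exact le_of_le_of_eq amgm (by ring)
    rw [div_le_div_iff₀ hdetr (mul_pos hdetr hpdr)]
    calc (∏ i, A i i) ^ ((1:ℝ)/n) * (A.det ^ ((1:ℝ)/n) * (∏ i, d i) ^ ((1:ℝ)/n))
        = ((∏ i, A i i) ^ ((1:ℝ)/n) * (∏ i, d i) ^ ((1:ℝ)/n)) * A.det ^ ((1:ℝ)/n) := by ring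
      _ ≤ ((∑ i, A i i * d i) / n) * A.det ^ ((1:ℝ)/n) :=
          mul_le_mul_of_nonneg_right key hdetr.le
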